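/- Every Σ-product of first countable spaces is α_1. -/

import Mathlib

open Filter Topology Set

/-- A countably infinite set converging to `x`: `x` is not in the set, and the set is
cofinitely contained in every neighborhood of `x`. -/
def ConvSeq {X : Type*} [TopologicalSpace X] (S : Set X) (x : X) : Prop :=
  S.Countable ∧ S.Infinite ∧ x ∉ S ∧ ∀ U ∈ nhds x, (S \ U).Finite

/-- A set converges to `x` in the weak sense: all but finitely many of its elements
are in every neighborhood of `x`. -/
def SetConv {X : Type*} [TopologicalSpace X] (S : Set X) (x : X) : Prop :=
  ∀ U ∈ nhds x, (S \ U).Finite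
/-- Every Σ-product of first countable spaces is α₁. -/
theorem sigma_product_alpha_one
    {ι : Type*} {π : ι → Type*} [∀ i, TopologicalSpace (π i)]
    [∀ i, FirstCountableTopology (π i)] (x : ∀ i, π i) :
    ∀ (y : {p : ∀ i, π i // {i | p i ≠ x i}.Countable})
      (S : ℕ → Set {p : ∀ i, π i // {i | p i ≠ x i}.Countable}),
      (∀ n, ConvSeq (S n) y) →
      ∃ T, T ⊆ ⋃ n, S n ∧ ConvSeq T y ∧ ∀ n, (S n \ T).Finite := by
  intro y S hS
  -- the countable support set
  set J : Set ι := {i | y.1 i ≠ x i} ∪ ⋃ n, ⋃ p ∈ S n, {i | p.1 i ≠ x i} with hJ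
  have hJc : J.Countable :=
    y.2.union (countable_iUnion fun n => (hS n).1.biUnion fun p _ => p.2)
  haveI : Countable J := hJc.to_subtype
  -- restriction map to the countable subproduct
  set f : {p : ∀ i, π i // {i | p i ≠ x i}.Countable} → ∀ j : J, π j :=
    fun p j => p.1 j with hfdef
  have hf : Continuous f :=
    continuous_pi fun j => (continuous_apply (j : ι)).comp continuous_subtype_val
  obtain ⟨B, hB⟩ := (nhds (f y)).exists_antitone_basis
  set U : ℕ → Set {p : ∀ i, π i // {i | p i ≠ x i}.Countable} := fun k => f ⁻¹' B k with hUdef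
  have hUmem : ∀ k, U k ∈ nhds y := fun k =>
    hf.continuousAt.preimage_mem_nhds (hB.mem k)
  have hUanti : ∀ {k l : ℕ}, k ≤ l → U l ⊆ U k := fun {k l} hkl =>
    preimage_mono (hB.antitone hkl)
  have hyE : ∀ i ∉ J, y.1 i = x i := by
    intro i hi
    by_contra h
    exact hi (Or.inl h)
  -- key: neighborhoods of y restricted to points supported in J are captured by the U k
  have key : ∀ V ∈ nhds y, ∃ k, ∀ p : {p : ∀ i, π i // {i | p i ≠ x i}.Countable}, (∀ i ∉ J, p.1 i = x i) → p ∈ U k → p ∈ V := by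
    intro V hV
    rw [mem_nhds_induced] at hV
    obtain ⟨W, hW, hWV⟩ := hV
    rw [nhds_pi, Filter.mem_pi] at hW
    obtain ⟨I, hIfin, t, ht, hsub⟩ := hW
    have hQfin : {j : J | (j : ι) ∈ I}.Finite :=
      hIfin.preimage (Subtype.val_injective.injOn)
    have hQ : Set.pi {j : J | (j : ι) ∈ I} (fun j => t j) ∈ nhds (f y) :=
      set_pi_mem_nhds hQfin fun j _ => ht j
    obtain ⟨k, -, hk⟩ := hB.toHasBasis.mem_iff.mp hQ
    refine ⟨k, fun p hpE hpU => hWV ?_⟩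
    refine hsub ?_
    intro i hi
    by_cases hiJ : i ∈ J
    · exact hk hpU ⟨i, hiJ⟩ hi
    · rw [hpE i hiJ, ← hyE i hiJ]
      exact mem_of_mem_nhds (ht i)
  -- all points of the S n are supported in J
  have hSE : ∀ n, ∀ p ∈ S n, ∀ i ∉ J, p.1 i = x i := by
    intro n p hp i hi
    by_contra h
    exact hi (Or.inr (mem_iUnion.mpr ⟨n, mem_iUnion₂.mpr ⟨p, hp, h⟩⟩))
  refine ⟨⋃ n, S n ∩ U n, iUnion_mono fun n => inter_subset_left, ?_, ?_⟩
  · refine ⟨countable_iUnion fun n => ((hS n).1.mono inter_subset_left), ?_, ?_, ?_⟩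
    · have h0 : (S 0 ∩ U 0).Infinite := by
        have : S 0 ⊆ (S 0 ∩ U 0) ∪ (S 0 \ U 0) := by
          intro p hp
          by_cases h : p ∈ U 0
          · exact Or.inl ⟨hp, h⟩
          · exact Or.inr ⟨hp, h⟩
        intro hfin
        exact (hS 0).2.1 (((hfin.union ((hS 0).2.2.2 _ (hUmem 0))).subset this))
      exact h0.mono (subset_iUnion (fun n => S n ∩ U n) 0)
    · intro hy
      obtain ⟨n, hn, -⟩ := mem_iUnion.mp hy
      exact (hS n).2.2.1 hn
    · intro V hV
      obtain ⟨k, hk⟩ := key V hV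
      have hsub : (⋃ n, S n ∩ U n) \ V ⊆ ⋃ n ∈ Set.Iio k, (S n \ U k) := by
        rintro p ⟨hp, hpV⟩
        obtain ⟨n, hpn, hpU⟩ := mem_iUnion.mp hp
        have hnk : n < k := by
          by_contra h
          exact hpV (hk p (hSE n p hpn) (hUanti (not_lt.mp h) hpU))
        have hpUk : p ∉ U k := fun h => hpV (hk p (hSE n p hpn) h)
        exact mem_biUnion hnk ⟨hpn, hpUk⟩
      exact ((Set.finite_Iio k).biUnion fun n _ => (hS n).2.2.2 _ (hUmem k)).subset hsub
  · intro n
    refine (((hS n).2.2.2 _ (hUmem n))).subset ?_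
    rintro p ⟨hp, hpT⟩
    exact ⟨hp, fun h => hpT (mem_iUnion.mpr ⟨n, hp, h⟩)⟩
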